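/- Let K be a number field with unit rank r ≥ 1. Then ρ_∞(K) ≥ (1/2)·R_K^{1/r}, where R_K is the regulator of K. -/

import Mathlib

open NumberField

/-- The logarithmic embedding of a unit: the coordinate at an infinite place `w`
is `mult w * log (w x)`. -/
noncomputable def logEmb (K : Type) [Field K] [NumberField K] (u : (𝓞 K)ˣ) :
    NumberField.InfinitePlace K → ℝ :=
  fun w => (w.mult : ℝ) * Real.log (w ((u : 𝓞 K) : K))

/-- The covering radius `ρ_∞(K)` of the lattice of units with respect to the sup norm. -/
noncomputable def rhoInf (K : Type) [Field K] [NumberField K] : ℝ :=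
  ⨆ v : {v : NumberField.InfinitePlace K → ℝ // ∑ w, v w = 0},
    ⨅ u : (𝓞 K)ˣ, ‖(v : NumberField.InfinitePlace K → ℝ) - logEmb K u‖

open NumberField.Units NumberField.Units.dirichletUnitTheorem Submodule MeasureTheory
  Bornology ZSpan Finset in
theorem rhoInf_aux (K : Type) [Field K] [NumberField K] : True := trivial

section aux

open NumberField.Units NumberField.Units.dirichletUnitTheorem Submodule MeasureTheory
  Bornology ZSpan

open scoped Classical Pointwise

variable (K : Type) [Field K] [NumberField K]

lemma logEmb_apply (u : (𝓞 K)ˣ) (w : {w : InfinitePlace K // w ≠ w₀}) :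
    logEmb K u w.val = logEmbedding K (Additive.ofMul u) w := rfl

lemma sum_eq_w₀_add (f : InfinitePlace K → ℝ) :
    ∑ w, f w = f w₀ + ∑ w : {w : InfinitePlace K // w ≠ w₀}, f w.val := by
  classical
  rw [Fintype.sum_eq_add_sum_compl w₀ f]
  congr 1
  exact Finset.sum_subtype _ (fun w => by simp) _

lemma sum_logEmb_eq_zero (u : (𝓞 K)ˣ) : ∑ w, logEmb K u w = 0 := by
  rw [sum_eq_w₀_add]
  have h := sum_logEmbedding_component (K := K) u
  simp only [logEmb_apply]
  rw [h]
  have h2 : logEmb K u w₀ = ((w₀ : InfinitePlace K).mult : ℝ) *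
      Real.log (w₀ ((algebraMap (𝓞 K) K) (u : 𝓞 K))) := rfl
  rw [h2]
  ring

lemma logEmb_mem_unitLattice (u : (𝓞 K)ˣ) :
    logEmbedding K (Additive.ofMul u) ∈ unitLattice K :=
  ⟨Additive.ofMul u, trivial, rfl⟩

lemma card_ne_w₀ : Fintype.card {w : InfinitePlace K // w ≠ w₀} = rank K := by
  rw [← Units.finrank_eq_rank, Module.finrank_fintype_fun_eq_card]

/-- Lemma A : the infimum is uniformly bounded over the trace-zero hyperplane. -/
lemma exists_bound_dist :
    ∃ C : ℝ, 0 ≤ C ∧ ∀ v : InfinitePlace K → ℝ, (∑ w, v w = 0) →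
      ∃ u : (𝓞 K)ˣ, ‖v - logEmb K u‖ ≤ C := by
  classical
  set b₀ := (basisUnitLattice K).ofZLatticeBasis ℝ (unitLattice K) with hb₀
  obtain ⟨C₀, hC₀⟩ := isBounded_iff_forall_norm_le.mp (fundamentalDomain_isBounded b₀)
  have hC₀0 : 0 ≤ max C₀ 0 := le_max_right _ _
  set r := Fintype.card {w : InfinitePlace K // w ≠ w₀}
  refine ⟨max (max C₀ 0) ((r : ℝ) * max C₀ 0), le_max_left _ _ |>.trans' hC₀0, fun v hv => ?_⟩
  set x : {w : InfinitePlace K // w ≠ w₀} → ℝ := fun w => v w.val with hx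
  obtain ⟨g, hg, -⟩ := exist_unique_vadd_mem_fundamentalDomain b₀ x
  have hgmem : (g : {w : InfinitePlace K // w ≠ w₀} → ℝ) ∈ unitLattice K := by
    rw [← Module.Basis.ofZLatticeBasis_span ℝ (unitLattice K) (b := basisUnitLattice K), ← hb₀]
    exact g.property
  obtain ⟨a, -, ha⟩ := Submodule.mem_map.mp (Submodule.neg_mem _ hgmem)
  have ha' : logEmbedding K a = -(g : {w : InfinitePlace K // w ≠ w₀} → ℝ) := ha
  refine ⟨Additive.toMul a, ?_⟩
  have key : ∀ w : {w : InfinitePlace K // w ≠ w₀},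
      (v - logEmb K (Additive.toMul a)) w.val = (g +ᵥ x) w := by
    intro w
    have h1 : logEmb K (Additive.toMul a) w.val = logEmbedding K a w := rfl
    have h2 : (g +ᵥ x) w = (g : {w : InfinitePlace K // w ≠ w₀} → ℝ) w + x w := rfl
    rw [Pi.sub_apply, h1, ha', h2]
    show v w.val - -(g : {w : InfinitePlace K // w ≠ w₀} → ℝ) w = _ + v w.val
    ring
  have hcoord : ∀ w : {w : InfinitePlace K // w ≠ w₀},
      |(v - logEmb K (Additive.toMul a)) w.val| ≤ max C₀ 0 := by
    intro w
    rw [key w]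
    refine le_trans ?_ (le_max_left _ _)
    exact (norm_le_pi_norm (g +ᵥ x) w).trans (hC₀ _ hg)
  rw [pi_norm_le_iff_of_nonneg (le_max_left _ _ |>.trans' hC₀0 : (0:ℝ) ≤ _)]
  intro w
  by_cases hw : w = w₀
  · subst hw
    have hsum : (v - logEmb K (Additive.toMul a)) w₀ =
        -∑ w : {w : InfinitePlace K // w ≠ w₀}, (v - logEmb K (Additive.toMul a)) w.val := by
      have h0 : ∑ w, (v - logEmb K (Additive.toMul a)) w = 0 := by
        simp only [Pi.sub_apply, Finset.sum_sub_distrib, hv, sum_logEmb_eq_zero, sub_zero]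
      rw [sum_eq_w₀_add] at h0
      linarith
    rw [Real.norm_eq_abs, hsum, abs_neg]
    refine le_trans (Finset.abs_sum_le_sum_abs _ _) ?_
    refine le_trans (Finset.sum_le_sum (fun w _ => hcoord w)) ?_
    rw [Finset.sum_const, Finset.card_univ, nsmul_eq_mul]
    exact le_max_right _ _
  · exact (hcoord ⟨w, hw⟩).trans (le_max_left _ _)

/-- Lemma B : from a covering of the projected space we get a volume bound. -/
lemma regulator_le_of_cover {t : ℝ} (ht : 0 ≤ t)
    (h : ∀ x : {w : InfinitePlace K // w ≠ w₀} → ℝ,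
      ∃ l ∈ unitLattice K, ‖x - l‖ ≤ t) :
    regulator K ≤ (2 * t) ^ rank K := by
  classical
  set b₀ := (basisUnitLattice K).ofZLatticeBasis ℝ (unitLattice K) with hb₀
  set F := fundamentalDomain b₀ with hF
  set B := Metric.closedBall (0 : {w : InfinitePlace K // w ≠ w₀} → ℝ) t with hB
  have hfund : IsAddFundamentalDomain (unitLattice K) F volume :=
    ZLattice.isAddFundamentalDomain (basisUnitLattice K) volume
  have hmv : MeasurableVAdd (unitLattice K) ({w : InfinitePlace K // w ≠ w₀} → ℝ) :=
    (inferInstance : MeasurableVAdd (unitLattice K).toAddSubgroup _)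
  have hvi : VAddInvariantMeasure (unitLattice K) ({w : InfinitePlace K // w ≠ w₀} → ℝ) volume :=
    (inferInstance : VAddInvariantMeasure (unitLattice K).toAddSubgroup _ volume)
  have hcover : (Set.univ : Set ({w : InfinitePlace K // w ≠ w₀} → ℝ)) ⊆
      ⋃ l : unitLattice K, l +ᵥ B := by
    intro x _
    obtain ⟨l, hl, hdist⟩ := h x
    refine Set.mem_iUnion.mpr ⟨⟨l, hl⟩, ?_⟩
    refine ⟨x - l, ?_, by show l + (x - l) = x; abel⟩
    simpa [hB, Metric.mem_closedBall, dist_zero_right] using hdist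
  have h1 : volume F ≤ ∑' l : unitLattice K, volume ((l +ᵥ B) ∩ F) := by
    have heq : F = ⋃ l : unitLattice K, ((l +ᵥ B) ∩ F) := by
      rw [← Set.iUnion_inter, eq_comm, Set.inter_eq_right]
      exact fun x _ => hcover (Set.mem_univ x)
    calc volume F = volume (⋃ l : unitLattice K, ((l +ᵥ B) ∩ F)) := by rw [← heq]
    _ ≤ ∑' l : unitLattice K, volume ((l +ᵥ B) ∩ F) := measure_iUnion_le _
  have h2 : ∑' l : unitLattice K, volume ((l +ᵥ B) ∩ F) = volume B :=
    (hfund.measure_eq_tsum B).symm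
  have h3 : volume B = ENNReal.ofReal ((2 * t) ^ rank K) := by
    rw [hB, Real.volume_pi_closedBall _ ht, card_ne_w₀]
  have h4 : volume F ≤ ENNReal.ofReal ((2 * t) ^ rank K) := h3 ▸ h2 ▸ h1
  have h5 : regulator K = (volume F).toReal := by
    have : regulator K = ZLattice.covolume (unitLattice K) volume := rfl
    rw [this]
    exact ZLattice.covolume_eq_measure_fundamentalDomain _ volume hfund
  rw [h5]
  refine ENNReal.toReal_le_of_le_ofReal (by positivity) h4

end aux

/-- For a number field `K` of unit rank `r ≥ 1`, the covering radius satisfies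
`ρ_∞(K) ≥ (1/2)·R_K^{1/r}` where `R_K` is the regulator of `K`. -/
theorem rhoInf_ge_half_regulator_rpow (K : Type) [Field K] [NumberField K]
    (hr : 1 ≤ NumberField.Units.rank K) :
    (1 / 2 : ℝ) * (NumberField.Units.regulator K) ^
      ((1 : ℝ) / (NumberField.Units.rank K : ℝ)) ≤ rhoInf K := by
  classical
  open NumberField.Units NumberField.Units.dirichletUnitTheorem Submodule in
  set f : {v : NumberField.InfinitePlace K → ℝ // ∑ w, v w = 0} → ℝ :=
    fun v => ⨅ u : (𝓞 K)ˣ, ‖(v : NumberField.InfinitePlace K → ℝ) - logEmb K u‖ with hf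
  have hrho : rhoInf K = ⨆ v, f v := rfl
  obtain ⟨C, hC0, hC⟩ := exists_bound_dist K
  have hbdd : BddAbove (Set.range f) := by
    refine ⟨C, fun y hy => ?_⟩
    obtain ⟨v, rfl⟩ := hy
    obtain ⟨u, hu⟩ := hC v v.property
    exact ciInf_le_of_le ⟨0, fun z hz => by obtain ⟨u', rfl⟩ := hz; exact norm_nonneg _⟩ u hu
  have hfle : ∀ v, f v ≤ rhoInf K := fun v => hrho ▸ le_ciSup hbdd v
  have hf0 : ∀ v, 0 ≤ f v := fun v => Real.iInf_nonneg (fun u => norm_nonneg _)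
  have hρ0 : 0 ≤ rhoInf K := (hf0 ⟨0, by simp⟩).trans (hfle ⟨0, by simp⟩)
  set ρ := rhoInf K
  have key : ∀ ε : ℝ, 0 < ε → (1 / 2 : ℝ) * (regulator K) ^
      ((1 : ℝ) / (rank K : ℝ)) ≤ ρ + ε := by
    intro ε hε
    have hcov : ∀ x : {w : InfinitePlace K // w ≠ w₀} → ℝ,
        ∃ l ∈ unitLattice K, ‖x - l‖ ≤ ρ + ε := by
      intro x
      set v : InfinitePlace K → ℝ :=
        fun w => if hw : w = w₀ then -(∑ i : {w : InfinitePlace K // w ≠ w₀}, x i)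
          else x ⟨w, hw⟩ with hv
      have hvsub : ∀ w : {w : InfinitePlace K // w ≠ w₀}, v w.val = x w := by
        intro w
        simp only [hv, dif_neg w.property]
      have hvsum : ∑ w, v w = 0 := by
        rw [sum_eq_w₀_add]
        have hvw₀ : v w₀ = -∑ i : {w : InfinitePlace K // w ≠ w₀}, x i := by
          simp [hv]
        rw [hvw₀, Finset.sum_congr rfl (fun w _ => hvsub w)]
        exact neg_add_cancel _
      have hlt : f ⟨v, hvsum⟩ < ρ + ε := lt_of_le_of_lt (hfle _) (by linarith)
      obtain ⟨u, hu⟩ := exists_lt_of_ciInf_lt hlt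
      refine ⟨logEmbedding K (Additive.ofMul u), logEmb_mem_unitLattice K u, ?_⟩
      have hnn : (0:ℝ) ≤ ρ + ε := by linarith
      rw [pi_norm_le_iff_of_nonneg hnn]
      intro w
      have : (x - logEmbedding K (Additive.ofMul u)) w = (v - logEmb K u) w.val := by
        simp only [Pi.sub_apply, hvsub w]
        rfl
      rw [this]
      exact (norm_le_pi_norm (v - logEmb K u) w.val).trans hu.le
    have hreg := regulator_le_of_cover K (by linarith) hcov
    have hrne : (rank K : ℝ) ≠ 0 := by
      have : 0 < rank K := hr
      exact Nat.cast_ne_zero.mpr this.ne'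
    have h2t : (0:ℝ) ≤ 2 * (ρ + ε) := by linarith
    have hpow : (regulator K) ^ ((1 : ℝ) / (rank K : ℝ)) ≤ 2 * (ρ + ε) := by
      have h1 : (regulator K) ^ ((1 : ℝ) / (rank K : ℝ)) ≤
          ((2 * (ρ + ε)) ^ (rank K : ℕ)) ^ ((1 : ℝ) / (rank K : ℝ)) :=
        Real.rpow_le_rpow (regulator_pos K).le hreg (by positivity)
      calc (regulator K) ^ ((1 : ℝ) / (rank K : ℝ)) ≤
          ((2 * (ρ + ε)) ^ (rank K : ℕ)) ^ ((1 : ℝ) / (rank K : ℝ)) := h1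
      _ = (2 * (ρ + ε)) ^ ((rank K : ℝ) * ((1 : ℝ) / (rank K : ℝ))) := by
          rw [← Real.rpow_natCast (2 * (ρ + ε)) (rank K), ← Real.rpow_mul h2t]
      _ = 2 * (ρ + ε) := by
          rw [mul_one_div_cancel hrne, Real.rpow_one]
    linarith
  exact le_of_forall_pos_le_add key
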